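/- In a complete lattice sup-generated by its coprime elements, if an element p is coprime and p ≤ x ≪ a for some x (where ≪ is the way-below relation), then p is totally below a. -/

import Mathlib

def IsCoprimeElt {L : Type*} [CompleteLattice L] (p : L) : Prop :=
  p ≠ ⊥ ∧ ∀ u v : L, p ≤ u ⊔ v → p ≤ u ∨ p ≤ v

def WayBelow {L : Type*} [CompleteLattice L] (x a : L) : Prop :=
  ∀ D : Set L, DirectedOn (· ≤ ·) D → a ≤ sSup D → ∃ d ∈ D, x ≤ d

def TotallyBelow {L : Type*} [CompleteLattice L] (x a : L) : Prop :=
  ∀ B : Set L, a ≤ sSup B → ∃ b ∈ B, x ≤ b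

lemma coprime_le_finset_sup {L : Type*} [CompleteLattice L] {p : L}
    (hp : IsCoprimeElt p) (F : Finset L) (h : p ≤ F.sup id) : ∃ b ∈ F, p ≤ b := by
  classical
  induction F using Finset.induction_on with
  | empty => simp at h; exact absurd h hp.1
  | insert _ _ hb ih =>
    rw [Finset.sup_insert] at h
    rcases hp.2 _ _ h with h1 | h2
    · exact ⟨_, Finset.mem_insert_self _ _, h1⟩
    · obtain ⟨b, hbF, hpb⟩ := ih h2
      exact ⟨b, Finset.mem_insert_of_mem hbF, hpb⟩

/-- In a complete lattice sup-generated by coprimes, a coprime `p` with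
`p ≤ x ≪ a` is totally below `a`. -/
theorem totallyBelow_of_coprime_le_wayBelow {L : Type*} [CompleteLattice L]
    (hgen : ∀ a : L, a = sSup {p | IsCoprimeElt p ∧ p ≤ a})
    {p x a : L} (hp : IsCoprimeElt p) (hpx : p ≤ x) (hxa : WayBelow x a) :
    TotallyBelow p a := by
  classical
  intro B hB
  set D : Set L := {d | ∃ F : Finset L, ↑F ⊆ B ∧ d = F.sup id} with hD
  have hdir : DirectedOn (· ≤ ·) D := by
    rintro _ ⟨F, hF, rfl⟩ _ ⟨G, hG, rfl⟩
    exact ⟨(F ∪ G).sup id, ⟨F ∪ G, by push_cast; exact Set.union_subset hF hG, rfl⟩,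
      Finset.sup_mono Finset.subset_union_left, Finset.sup_mono Finset.subset_union_right⟩
  have hle : a ≤ sSup D := by
    refine hB.trans (sSup_le fun b hb => le_sSup_of_le ⟨{b}, by simpa using hb, rfl⟩ (by simp))
  obtain ⟨d, ⟨F, hF, rfl⟩, hxd⟩ := hxa D hdir hle
  obtain ⟨b, hbF, hpb⟩ := coprime_le_finset_sup hp F (hpx.trans hxd)
  exact ⟨b, hF hbF, hpb⟩
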